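/- Let F = 𝒫(𝔾) for a nonempty subset 𝔾 ⊆ G(p,V). Then A ∈ Int F if and only if there exists ε > 0 such that A − ε·I + Int 𝒫 is contained in F (where I is the identity and Int 𝒫 the positive definite cone). -/

import Mathlib

open Module RealInnerProductSpace

set_option maxHeartbeats 2000000

noncomputable section

variable {V : Type*} [NormedAddCommGroup V] [InnerProductSpace ℝ V] [FiniteDimensional ℝ V]

/-- Orthogonal projection onto the subspace `W`, as an endomorphism of `V`. -/
def projCLM (W : Submodule ℝ V) : V →L[ℝ] V :=
  W.subtypeL.comp (W.orthogonalProjectionOnto)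

/-- `tr_W A = tr (P_W ∘ A)`, the trace of the restriction of `A` to `W`. -/
def trW (W : Submodule ℝ V) (A : V →L[ℝ] V) : ℝ :=
  LinearMap.trace ℝ V (((projCLM W).comp A : V →L[ℝ] V) : V →ₗ[ℝ] V)

/-- The subequation `𝒫(𝔾) ⊆ Sym²(V)`: self-adjoint endomorphisms `A` with
`tr_W A ≥ 0` for all `W ∈ 𝔾`. -/
def PG (𝔾 : Set (Submodule ℝ V)) : Set (selfAdjoint (V →L[ℝ] V)) :=
  {A | ∀ W ∈ 𝔾, 0 ≤ trW W (A : V →L[ℝ] V)}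

/-- The positive semidefinite cone `𝒫 ⊆ Sym²(V)`. -/
def posSA : Set (selfAdjoint (V →L[ℝ] V)) :=
  {A | ContinuousLinearMap.IsPositive (A : V →L[ℝ] V)}

/-- The identity `I` as an element of `Sym²(V)`. -/
def idSA : selfAdjoint (V →L[ℝ] V) := ⟨1, IsSelfAdjoint.one _⟩

/-- The trace of a positive operator is nonnegative. -/
lemma trace_nonneg_of_isPositive {T : V →L[ℝ] V} (hT : T.IsPositive) :
    0 ≤ LinearMap.trace ℝ V (T : V →ₗ[ℝ] V) := by
  let b := stdOrthonormalBasis ℝ V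
  rw [LinearMap.trace_eq_matrix_trace ℝ b.toBasis, Matrix.trace]
  apply Finset.sum_nonneg
  intro i _
  have h1 : LinearMap.toMatrix b.toBasis b.toBasis (T : V →ₗ[ℝ] V) i i
      = b.repr ((T : V →ₗ[ℝ] V) (b.toBasis i)) i := by
    rw [LinearMap.toMatrix_apply, OrthonormalBasis.coe_toBasis_repr_apply]
  rw [Matrix.diag_apply, h1, OrthonormalBasis.repr_apply_apply]
  have := hT.inner_nonneg_right (b i)
  simpa using this

lemma projCLM_isSelfAdjoint (W : Submodule ℝ V) : IsSelfAdjoint (projCLM W) :=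
  isSelfAdjoint_starProjection W

lemma projCLM_idem (W : Submodule ℝ V) : (projCLM W).comp (projCLM W) = projCLM W := by
  ext x
  simp [projCLM, Submodule.orthogonalProjectionOnto_mem_subspace_eq_self,
    Submodule.starProjection_eq_self_iff, Submodule.starProjection_apply_mem]

/-- The partial trace of a positive operator is nonnegative. -/
lemma trW_nonneg_of_isPositive (W : Submodule ℝ V) {T : V →L[ℝ] V} (hT : T.IsPositive) :
    0 ≤ trW W T := by
  have hQ : IsSelfAdjoint (projCLM W) := projCLM_isSelfAdjoint W
  set Q := projCLM W with hQdef
  have hpos : ((projCLM W) ∘L T ∘L (projCLM W)).IsPositive := by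
    have := hT.adjoint_conj (projCLM W)
    rwa [hQ.adjoint_eq] at this
  have htr : trW W T
      = LinearMap.trace ℝ V (((projCLM W) ∘L T ∘L (projCLM W) : V →L[ℝ] V) : V →ₗ[ℝ] V) := by
    unfold trW
    have h2 : ((projCLM W).comp T : V →L[ℝ] V)
        = ((projCLM W).comp ((projCLM W).comp T) : V →L[ℝ] V) := by
      rw [← ContinuousLinearMap.comp_assoc, projCLM_idem]
    rw [h2]
    have : (((projCLM W).comp ((projCLM W).comp T) : V →L[ℝ] V) : V →ₗ[ℝ] V)
        = ((projCLM W : V →ₗ[ℝ] V) * (((projCLM W).comp T : V →L[ℝ] V) : V →ₗ[ℝ] V)) := rfl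
    rw [this, LinearMap.trace_mul_comm]
    congr 1
  rw [htr]
  exact trace_nonneg_of_isPositive hpos

lemma trW_add (W : Submodule ℝ V) (A B : V →L[ℝ] V) :
    trW W (A + B) = trW W A + trW W B := by
  unfold trW
  rw [ContinuousLinearMap.comp_add]
  push_cast
  rw [map_add]

/-- `A ∈ Int F` iff for some `ε > 0` the set `A - εI + Int 𝒫` is
contained in `F = 𝒫(𝔾)`. -/
theorem statement6 (p : ℕ) (𝔾 : Set (Submodule ℝ V)) (h𝔾 : 𝔾.Nonempty)
    (hGr : ∀ W ∈ 𝔾, finrank ℝ W = p) (A : selfAdjoint (V →L[ℝ] V)) :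
    A ∈ interior (PG 𝔾) ↔
      ∃ ε : ℝ, 0 < ε ∧ ∀ P ∈ interior (posSA (V := V)), A - ε • idSA + P ∈ PG 𝔾 := by
  constructor
  · intro hA
    rw [mem_interior_iff_mem_nhds, Metric.mem_nhds_iff] at hA
    obtain ⟨δ, hδ, hball⟩ := hA
    refine ⟨δ / 2, by linarith, ?_⟩
    intro P hP W hW
    have hPpos' : P ∈ posSA := interior_subset hP
    have hPpos : ContinuousLinearMap.IsPositive (P : V →L[ℝ] V) := hPpos'
    have hmem : A - (δ / 2) • idSA ∈ PG 𝔾 := by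
      apply hball
      rw [Metric.mem_ball, Subtype.dist_eq, dist_eq_norm]
      have : ((A - (δ / 2) • idSA : selfAdjoint (V →L[ℝ] V)) : V →L[ℝ] V) - (A : V →L[ℝ] V)
          = -((δ / 2) • (1 : V →L[ℝ] V)) := by
        push_cast [idSA]
        abel
      rw [this, norm_neg]
      have h1 : ‖(1 : V →L[ℝ] V)‖ ≤ 1 := ContinuousLinearMap.norm_id_le
      calc ‖(δ/2) • (1 : V →L[ℝ] V)‖ ≤ ‖(δ/2 : ℝ)‖ * ‖(1 : V →L[ℝ] V)‖ :=
            ContinuousLinearMap.opNorm_smul_le _ _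
        _ ≤ (δ/2) * 1 := by
            apply mul_le_mul _ h1 (norm_nonneg _) (by linarith)
            rw [Real.norm_eq_abs, abs_of_pos (by linarith)]
        _ < δ := by linarith
    have key : ((A - (δ/2) • idSA + P : selfAdjoint (V →L[ℝ] V)) : V →L[ℝ] V)
        = ((A - (δ/2) • idSA : selfAdjoint (V →L[ℝ] V)) : V →L[ℝ] V) + (P : V →L[ℝ] V) := by
      push_cast; abel
    rw [key, trW_add]
    have h1 := hmem W hW
    have h2 := trW_nonneg_of_isPositive W hPpos
    linarith
  · rintro ⟨ε, hε, h⟩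
    rw [mem_interior_iff_mem_nhds, Metric.mem_nhds_iff]
    refine ⟨ε, hε, ?_⟩
    intro B hB
    rw [Metric.mem_ball, Subtype.dist_eq, dist_eq_norm] at hB
    have hBA : B = A - ε • idSA + (ε • idSA + (B - A)) := by abel
    rw [hBA]
    apply h
    -- show ε • idSA + (B - A) ∈ interior posSA
    have hballpos : Metric.ball (ε • idSA : selfAdjoint (V →L[ℝ] V)) ε ⊆ posSA := by
      intro C hC
      rw [Metric.mem_ball, Subtype.dist_eq, dist_eq_norm] at hC
      refine ⟨ContinuousLinearMap.isSelfAdjoint_iff_isSymmetric.mp C.2, ?_⟩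
      intro x
      set D : V →L[ℝ] V := (C : V →L[ℝ] V) - ε • (1 : V →L[ℝ] V) with hD
      have hDnorm : ‖D‖ < ε := by
        have : ((ε • idSA : selfAdjoint (V →L[ℝ] V)) : V →L[ℝ] V)
            = ε • (1 : V →L[ℝ] V) := by push_cast [idSA]; abel
        rw [hD, ← this]; exact hC
      have hCx : (C : V →L[ℝ] V) x = D x + ε • x := by
        rw [hD]; simp
      have habs : abs (⟪D x, x⟫) ≤ ‖D‖ * ‖x‖ * ‖x‖ := by
        calc abs (⟪D x, x⟫) ≤ ‖D x‖ * ‖x‖ := abs_real_inner_le_norm _ _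
          _ ≤ ‖D‖ * ‖x‖ * ‖x‖ := by
              exact mul_le_mul_of_nonneg_right (D.le_opNorm x) (norm_nonneg _)
      have hinner : ⟪(C : V →L[ℝ] V) x, x⟫ = ⟪D x, x⟫ + ε * (‖x‖ * ‖x‖) := by
        rw [hCx, inner_add_left, real_inner_smul_left, real_inner_self_eq_norm_mul_norm]
      have : 0 ≤ ⟪(C : V →L[ℝ] V) x, x⟫ := by
        rw [hinner]
        have h0 : 0 ≤ ‖x‖ := norm_nonneg x
        nlinarith [abs_le.mp habs]
      simpa [ContinuousLinearMap.reApplyInnerSelf] using this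
    have : ε • idSA + (B - A) ∈ Metric.ball (ε • idSA : selfAdjoint (V →L[ℝ] V)) ε := by
      rw [Metric.mem_ball, Subtype.dist_eq, dist_eq_norm]
      have : ((ε • idSA + (B - A) : selfAdjoint (V →L[ℝ] V)) : V →L[ℝ] V)
          - ((ε • idSA : selfAdjoint (V →L[ℝ] V)) : V →L[ℝ] V)
          = (B : V →L[ℝ] V) - (A : V →L[ℝ] V) := by push_cast; abel
      rw [this]; exact hB
    exact interior_maximal hballpos Metric.isOpen_ball this
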